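/- arXiv:1607.05050 — 2 statements merged into one kernel-verified Lean document; each statement's English description precedes it below -/
import Mathlib

section
/- Let γ₁, γ₂ ∈ ℝ, let τ ∈ ℂ with Im τ > 0, let ξ ∈ ℂ, and set p = e^{2iπτ} (so 0 < |p| < 1). Then ϑ[γ₁,γ₂](ξ,τ) = e^{2πi γ₁ γ₂} · e^{iπ γ₁² τ} · e^{2πi γ₁ ξ} · Θ_p(−e^{2iπγ₂} · e^{iπ(2γ₁+1)τ} · e^{2iπξ}), i.e. the theta function with characteristics equals (−1)^{2γ₁γ₂} p^{γ₁²/2} z^{2γ₁} Θ_p(−e^{2iπγ₂} p^{γ₁+1/2} z²) with z = e^{iπξ}, where all fractional powers are interpreted as the indicated exponentials. -/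
open Finset Filter

namespace JTPaux


/-- Gaussian binomial coefficient as a complex number (value of the Gaussian binomial
polynomial at `Q`), defined via the `q`-Pascal recursion. -/
noncomputable def gb (Q : ℂ) : ℕ → ℕ → ℂ
  | 0, 0 => 1
  | 0, _+1 => 0
  | _+1, 0 => 1
  | n+1, k+1 => gb Q n (k+1) + Q^(n-k) * gb Q n k

@[simp] lemma gb_zero_right (Q : ℂ) (n : ℕ) : gb Q n 0 = 1 := by
  cases n <;> rfl

lemma gb_eq_zero (Q : ℂ) : ∀ n k, n < k → gb Q n k = 0 := by
  intro n
  induction n with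
  | zero => intro k hk; match k, hk with | (k+1), _ => rfl
  | succ n ih =>
    intro k hk
    match k, hk with
    | (k+1), hk =>
      show gb Q n (k+1) + Q^(n-k) * gb Q n k = 0
      rw [ih (k+1) (by omega), ih k (by omega)]
      ring

@[simp] lemma gb_self (Q : ℂ) : ∀ n, gb Q n n = 1 := by
  intro n
  induction n with
  | zero => rfl
  | succ n ih =>
    show gb Q n (n+1) + Q^(n-n) * gb Q n n = 1
    rw [gb_eq_zero Q n (n+1) (by omega), ih]
    simp

/-- `e k = k*(k-1)/2`. -/
def ee : ℕ → ℕ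
  | 0 => 0
  | k+1 => ee k + k

lemma two_ee (k : ℕ) : 2 * ee k = k * (k - 1) := by
  induction k with
  | zero => rfl
  | succ k ih =>
    show 2 * (ee k + k) = (k + 1) * (k + 1 - 1)
    rw [Nat.mul_add, ih]
    cases k with
    | zero => rfl
    | succ k => simp only [Nat.succ_sub_one]; ring

/-- Gauss's binomial theorem. -/
theorem gauss (Q y : ℂ) (n : ℕ) :
    ∏ k ∈ range n, (1 + y * Q^k)
      = ∑ k ∈ range (n+1), gb Q n k * Q^(ee k) * y^k := by
  induction n with
  | zero => simp [ee, gb]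
  | succ n ih =>
    rw [prod_range_succ, ih]
    have h1 : ∑ k ∈ range (n+1+1), gb Q (n+1) k * Q^(ee k) * y^k
        = 1 + ∑ k ∈ range (n+1), gb Q (n+1) (k+1) * Q^(ee (k+1)) * y^(k+1) := by
      rw [Finset.sum_range_succ' (fun k => gb Q (n+1) k * Q^(ee k) * y^k) (n+1)]
      simp [ee, add_comm]
    have h2 : ∀ k ∈ range (n+1), gb Q (n+1) (k+1) * Q^(ee (k+1)) * y^(k+1)
        = gb Q n (k+1) * Q^(ee (k+1)) * y^(k+1)
          + (gb Q n k * Q^(ee k) * y^k) * (y * Q^n) := by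
      intro k hk
      rw [mem_range] at hk
      show (gb Q n (k+1) + Q^(n-k) * gb Q n k) * Q^(ee (k+1)) * y^(k+1) = _
      have : Q^(n-k) * Q^(ee (k+1)) = Q^(ee k) * Q^n := by
        rw [← pow_add, ← pow_add]
        congr 1
        show n - k + (ee k + k) = _
        omega
      calc (gb Q n (k+1) + Q^(n-k) * gb Q n k) * Q^(ee (k+1)) * y^(k+1)
          = gb Q n (k+1) * Q^(ee (k+1)) * y^(k+1)
            + gb Q n k * (Q^(n-k) * Q^(ee (k+1))) * y^(k+1) := by ring
        _ = _ := by rw [this]; ring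
    rw [h1, Finset.sum_congr rfl h2, Finset.sum_add_distrib]
    have h3 : 1 + (∑ k ∈ range (n+1), gb Q n (k+1) * Q^(ee (k+1)) * y^(k+1))
        = ∑ k ∈ range (n+1), gb Q n k * Q^(ee k) * y^k := by
      rw [Finset.sum_range_succ (fun k => gb Q n (k+1) * Q^(ee (k+1)) * y^(k+1)) n,
        gb_eq_zero Q n (n+1) (by omega)]
      rw [Finset.sum_range_succ' (fun k => gb Q n k * Q^(ee k) * y^k) n]
      simp [ee]
      ring
    rw [← add_assoc, h3, ← Finset.sum_mul]
    ring




/-- Finite q-Pochhammer `∏_{j<n} (1 - Q^{j+1})`. -/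
noncomputable def fp (Q : ℂ) (n : ℕ) : ℂ := ∏ j ∈ range n, (1 - Q^(j+1))

@[simp] lemma fp_zero (Q : ℂ) : fp Q 0 = 1 := rfl

lemma fp_succ (Q : ℂ) (n : ℕ) : fp Q (n+1) = fp Q n * (1 - Q^(n+1)) := prod_range_succ _ _

theorem gb_mul_fp (Q : ℂ) : ∀ n k, k ≤ n → gb Q n k * fp Q k * fp Q (n-k) = fp Q n := by
  intro n
  induction n with
  | zero => intro k hk; interval_cases k; simp [gb_self]
  | succ n ih =>
    intro k hk
    match k with
    | 0 =>
      show gb Q (n+1) 0 * fp Q 0 * fp Q (n+1-0) = fp Q (n+1)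
      rw [gb_zero_right]; simp
    | (k'+1) =>
      show (gb Q n (k'+1) + Q^(n-k') * gb Q n k') * fp Q (k'+1) * fp Q (n+1-(k'+1)) = _
      have hk' : k' ≤ n := by omega
      rcases eq_or_lt_of_le hk' with rfl | hlt
      · rw [gb_eq_zero Q k' (k'+1) (by omega), gb_self]
        simp
      · have hnk : n + 1 - (k'+1) = (n - (k'+1)) + 1 := by omega
        have hpow2 : (n - (k'+1)) + 1 = n - k' := by omega
        have e1 : gb Q n (k'+1) * fp Q (k'+1) * fp Q (n-(k'+1)) = fp Q n := ih (k'+1) hlt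
        have e2 : gb Q n k' * fp Q k' * (fp Q (n-(k'+1)) * (1 - Q^(n-k'))) = fp Q n := by
          have := ih k' hk'
          rwa [show n - k' = (n-(k'+1))+1 by omega, fp_succ, hpow2] at this
        have hfk : fp Q (k'+1) = fp Q k' * (1 - Q^(k'+1)) := fp_succ Q k'
        have hpow : Q^(n-k') * Q^(k'+1) = Q^(n+1) := by
          rw [← pow_add]; congr 1; omega
        rw [hnk, fp_succ Q (n-(k'+1)), hpow2, fp_succ Q n]
        linear_combination (1 - Q^(n-k')) * e1 + Q^(n-k') * (1 - Q^(k'+1)) * e2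
          + (Q^(n-k') * gb Q n k' * fp Q (n-(k'+1)) * (1 - Q^(n-k'))) * hfk
          - fp Q n * hpow




variable {Q : ℂ} (hQ : ‖Q‖ < 1)

lemma norm_pow_succ_lt (j : ℕ) (hQ : ‖Q‖ < 1) : ‖Q^(j+1)‖ < 1 := by
  rw [norm_pow]
  exact pow_lt_one₀ (norm_nonneg Q) hQ (by omega)

lemma fp_ne_zero (hQ : ‖Q‖ < 1) (n : ℕ) : fp Q n ≠ 0 := by
  apply prod_ne_zero_iff.2
  intro j _
  intro h
  have h2 := norm_pow_succ_lt (Q := Q) j hQ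
  have : Q^(j+1) = 1 := by linear_combination -h
  rw [this, norm_one] at h2
  exact lt_irrefl _ h2

/-- Uniform upper bound for `‖fp Q n‖`. -/
noncomputable def cUp (Q : ℂ) : ℝ := Real.exp ((1-‖Q‖)⁻¹)

/-- Uniform positive lower bound for `‖fp Q n‖`. -/
noncomputable def cLow (Q : ℂ) : ℝ := Real.exp (-((1-‖Q‖)⁻¹ * (1-‖Q‖)⁻¹))

lemma cLow_pos : 0 < cLow Q := Real.exp_pos _

lemma sum_pow_le (hQ : ‖Q‖ < 1) (n : ℕ) : ∑ j ∈ range n, ‖Q‖^(j+1) ≤ (1-‖Q‖)⁻¹ := by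
  have hsum : Summable (fun j : ℕ => ‖Q‖^(j+1)) := by
    apply Summable.comp_injective (summable_geometric_of_lt_one (norm_nonneg Q) hQ)
    exact fun a b => by omega
  refine le_trans (Summable.sum_le_tsum (range n) (fun j _ => by positivity) hsum) ?_
  calc ∑' j : ℕ, ‖Q‖^(j+1) ≤ ∑' j : ℕ, ‖Q‖^j := by
        apply Summable.tsum_le_tsum _ hsum (summable_geometric_of_lt_one (norm_nonneg Q) hQ)
        intro j
        exact pow_le_pow_of_le_one (norm_nonneg Q) hQ.le (by omega)
    _ = (1-‖Q‖)⁻¹ := tsum_geometric_of_lt_one (norm_nonneg Q) hQ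

lemma fp_norm_le (hQ : ‖Q‖ < 1) (n : ℕ) : ‖fp Q n‖ ≤ cUp Q := by
  rw [fp, norm_prod]
  calc ∏ j ∈ range n, ‖1 - Q^(j+1)‖ ≤ ∏ j ∈ range n, Real.exp (‖Q‖^(j+1)) := by
        apply prod_le_prod (fun j _ => norm_nonneg _)
        intro j _
        calc ‖1 - Q^(j+1)‖ ≤ ‖(1:ℂ)‖ + ‖Q^(j+1)‖ := norm_sub_le _ _
          _ = 1 + ‖Q‖^(j+1) := by rw [norm_one, norm_pow]
          _ ≤ Real.exp (‖Q‖^(j+1)) := Real.add_one_le_exp _ |>.trans_eq' (by ring_nf)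
    _ = Real.exp (∑ j ∈ range n, ‖Q‖^(j+1)) := (Real.exp_sum _ _).symm
    _ ≤ cUp Q := Real.exp_le_exp.2 (sum_pow_le hQ n)

lemma one_sub_ge_exp (s : ℝ) (hs0 : 0 ≤ s) (hst : s ≤ ‖Q‖) (hQ : ‖Q‖ < 1) :
    Real.exp (-((1-‖Q‖)⁻¹ * s)) ≤ 1 - s := by
  have h1s : 0 < 1 - s := by linarith
  have h1t : 0 < 1 - ‖Q‖ := by linarith
  have hlog : -((1-s)⁻¹ * s) ≤ Real.log (1 - s) := by
    have := Real.log_le_sub_one_of_pos (x := (1-s)⁻¹) (by positivity)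
    rw [Real.log_inv] at this
    have h2 : (1-s)⁻¹ - 1 = (1-s)⁻¹ * s := by field_simp; ring
    linarith [h2 ▸ this]
  calc Real.exp (-((1-‖Q‖)⁻¹ * s)) ≤ Real.exp (-((1-s)⁻¹ * s)) := by
        apply Real.exp_le_exp.2
        have : (1-‖Q‖)⁻¹ * s ≥ (1-s)⁻¹ * s := by
          apply mul_le_mul_of_nonneg_right _ hs0
          exact inv_anti₀ h1t (by linarith)
        linarith
    _ ≤ Real.exp (Real.log (1-s)) := Real.exp_le_exp.2 hlog
    _ = 1 - s := Real.exp_log h1s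

lemma fp_norm_ge (hQ : ‖Q‖ < 1) (n : ℕ) : cLow Q ≤ ‖fp Q n‖ := by
  rw [fp, norm_prod]
  calc cLow Q = Real.exp (-((1-‖Q‖)⁻¹ * (1-‖Q‖)⁻¹)) := rfl
    _ ≤ Real.exp (∑ j ∈ range n, -((1-‖Q‖)⁻¹ * ‖Q‖^(j+1))) := by
        apply Real.exp_le_exp.2
        have : ∑ j ∈ range n, -((1-‖Q‖)⁻¹ * ‖Q‖^(j+1))
            = -((1-‖Q‖)⁻¹ * ∑ j ∈ range n, ‖Q‖^(j+1)) := by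
          rw [Finset.mul_sum, ← Finset.sum_neg_distrib]
        rw [this, neg_le_neg_iff]
        have h1t : (0:ℝ) < (1-‖Q‖)⁻¹ := by
          have : (0:ℝ) < 1 - ‖Q‖ := by linarith
          positivity
        exact mul_le_mul_of_nonneg_left (sum_pow_le hQ n) h1t.le
    _ = ∏ j ∈ range n, Real.exp (-((1-‖Q‖)⁻¹ * ‖Q‖^(j+1))) := Real.exp_sum _ _
    _ ≤ ∏ j ∈ range n, ‖1 - Q^(j+1)‖ := by
        apply prod_le_prod (fun j _ => (Real.exp_pos _).le)
        intro j _
        refine le_trans (one_sub_ge_exp (‖Q‖^(j+1)) (by positivity) ?_ hQ) ?_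
        · exact pow_le_pow_of_le_one (norm_nonneg Q) hQ.le (by omega) |>.trans_eq
            (pow_one _)
        · calc 1 - ‖Q‖^(j+1) = ‖(1:ℂ)‖ - ‖Q^(j+1)‖ := by rw [norm_one, norm_pow]
            _ ≤ ‖1 - Q^(j+1)‖ := norm_sub_norm_le _ _

lemma gb_norm_le (hQ : ‖Q‖ < 1) {n k : ℕ} (hk : k ≤ n) :
    ‖gb Q n k‖ ≤ cUp Q / (cLow Q * cLow Q) := by
  have h := gb_mul_fp Q n k hk
  have h1 : ‖gb Q n k‖ * (‖fp Q k‖ * ‖fp Q (n-k)‖) = ‖fp Q n‖ := by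
    rw [← norm_mul, ← norm_mul]
    exact congrArg _ (by linear_combination h)
  have hden : cLow Q * cLow Q ≤ ‖fp Q k‖ * ‖fp Q (n-k)‖ :=
    mul_le_mul (fp_norm_ge hQ k) (fp_norm_ge hQ (n-k)) cLow_pos.le (norm_nonneg _)
  have hpos : 0 < cLow Q * cLow Q := mul_pos cLow_pos cLow_pos
  have hdpos : 0 < ‖fp Q k‖ * ‖fp Q (n-k)‖ := lt_of_lt_of_le hpos hden
  rw [div_eq_mul_inv]
  calc ‖gb Q n k‖ = ‖fp Q n‖ * (‖fp Q k‖ * ‖fp Q (n-k)‖)⁻¹ := by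
        rw [← h1, mul_assoc, mul_inv_cancel₀ hdpos.ne', mul_one]
    _ ≤ cUp Q * (cLow Q * cLow Q)⁻¹ := by
        apply mul_le_mul (fp_norm_le hQ n) _ (by positivity) ((Real.exp_pos _).le)
        exact inv_anti₀ hpos hden



lemma summable_log_one_add (a p : ℂ) (hp : ‖p‖ < 1)
    (h0 : ∀ j : ℕ, 1 + a * p ^ j ≠ 0) :
    Summable (fun j : ℕ => Complex.log (1 + a * p ^ j)) := by
  apply Summable.of_norm_bounded_eventually_nat (g := fun j => 3/2 * (‖a‖ * ‖p‖^j))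
  · exact (Summable.mul_left _ ((summable_geometric_of_lt_one (norm_nonneg p) hp).mul_left _))
  · have ht : Filter.Tendsto (fun j : ℕ => ‖a‖ * ‖p‖^j) atTop (nhds 0) := by
      simpa using (tendsto_pow_atTop_nhds_zero_of_lt_one (norm_nonneg p) hp).const_mul ‖a‖
    filter_upwards [ht.eventually (eventually_le_nhds (by norm_num : (0:ℝ) < 1/2))] with j hj
    have h1 : ‖a * p^j‖ ≤ 1/2 := by rw [norm_mul, norm_pow]; exact hj
    calc ‖Complex.log (1 + a * p^j)‖ ≤ 3/2 * ‖a * p^j‖ :=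
          Complex.norm_log_one_add_half_le_self h1
      _ = 3/2 * (‖a‖ * ‖p‖^j) := by rw [norm_mul, norm_pow]

lemma multipliable_one_add (a p : ℂ) (hp : ‖p‖ < 1) :
    Multipliable (fun j : ℕ => 1 + a * p ^ j) := by
  by_cases h0 : ∀ j : ℕ, 1 + a * p ^ j ≠ 0
  · exact Complex.multipliable_of_summable_log (summable_log_one_add a p hp h0)
  · push_neg at h0
    obtain ⟨j₀, hj₀⟩ := h0
    refine ⟨0, ?_⟩
    rw [HasProd]
    apply tendsto_const_nhds.congr'
    filter_upwards [Filter.eventually_ge_atTop ({j₀} : Finset ℕ)] with s hs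
    rw [eq_comm]
    exact Finset.prod_eq_zero (hs (Finset.mem_singleton_self j₀)) hj₀

lemma tprod_one_add_ne_zero (a p : ℂ) (hp : ‖p‖ < 1)
    (h0 : ∀ j : ℕ, 1 + a * p ^ j ≠ 0) :
    (∏' j : ℕ, (1 + a * p ^ j)) ≠ 0 := by
  have h2 := Complex.cexp_tsum_eq_tprod (f := fun j : ℕ => 1 + a * p ^ j) h0
    (summable_log_one_add a p hp h0)
  rw [← h2]
  exact Complex.exp_ne_zero _




lemma zpow_sum₀ {q : ℂ} (hq0 : q ≠ 0) (g : ℕ → ℤ) (s : Finset ℕ) :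
    q ^ (∑ i ∈ s, g i) = ∏ i ∈ s, q ^ (g i) := by
  classical
  induction s using Finset.induction_on with
  | empty => simp
  | insert a s h ih => rw [Finset.sum_insert h, Finset.prod_insert h, zpow_add₀ hq0, ih]

lemma sum_odd_range (N : ℕ) : ∑ j ∈ range N, (2*(j:ℤ)+1) = (N:ℤ)^2 := by
  induction N with
  | zero => simp
  | succ N ih => rw [Finset.sum_range_succ, ih]; push_cast; ring

variable {q x : ℂ} (hq0 : q ≠ 0) (hx : x ≠ 0)

theorem finiteJTP (hq0 : q ≠ 0) (hx : x ≠ 0) (N : ℕ) :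
    ∑ k ∈ range (2*N+1), gb (q^2) (2*N) k * q^(((k:ℤ) - N)^2) * x^((k:ℤ) - N)
      = (∏ j ∈ range N, (1 + x * q^(2*j+1))) * (∏ j ∈ range N, (1 + x⁻¹ * q^(2*j+1))) := by
  have key := congrArg (fun w => q^((N:ℤ)^2) * x^(-(N:ℤ)) * w)
    (gauss (q^2) (x * q^((1:ℤ) - 2*N)) (2*N))
  -- massage RHS of key to LHS of goal
  rw [Finset.mul_sum] at key
  have hterm : ∀ k ∈ range (2*N+1),
      q^((N:ℤ)^2) * x^(-(N:ℤ)) * (gb (q^2) (2*N) k * (q^2)^(ee k) * (x * q^((1:ℤ) - 2*N))^k)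
        = gb (q^2) (2*N) k * q^(((k:ℤ) - N)^2) * x^((k:ℤ) - N) := by
    intro k _
    have h2e : (2 * ee k : ℤ) = (k:ℤ) * ((k:ℤ) - 1) := by
      cases k with
      | zero =>
        have h := two_ee 0
        simp only [Nat.mul_comm] at h
        push_cast
        omega
      | succ k =>
        have h0 := two_ee (k+1)
        rw [Nat.add_sub_cancel] at h0
        have h2 : (2 * (ee (k+1)) : ℤ) = ((k:ℤ)+1) * k := by exact_mod_cast h0
        push_cast at h2 ⊢
        linear_combination h2
    have e1 : ((q^2)^(ee k) : ℂ) = q ^ ((2 * ee k : ℕ) : ℤ) := by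
      rw [← pow_mul, zpow_natCast]
    have e2 : (x * q^((1:ℤ) - 2*N))^k = x^(k:ℤ) * q^(((1:ℤ) - 2*N) * k) := by
      rw [mul_pow, ← zpow_natCast x k, ← zpow_natCast (q^((1:ℤ) - 2*N)) k, ← zpow_mul]
    rw [e1, e2]
    rw [show q^((N:ℤ)^2) * x^(-(N:ℤ)) * (gb (q^2) (2*N) k * q^((2*ee k : ℕ):ℤ)
        * (x^(k:ℤ) * q^(((1:ℤ) - 2*N) * k)))
      = gb (q^2) (2*N) k * (q^((N:ℤ)^2) * q^((2*ee k : ℕ):ℤ) * q^(((1:ℤ) - 2*N) * k))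
        * (x^(-(N:ℤ)) * x^(k:ℤ)) from by ring]
    rw [← zpow_add₀ hq0, ← zpow_add₀ hq0, ← zpow_add₀ hx]
    rw [show ((N:ℤ)^2 + ((2 * ee k : ℕ):ℤ) + ((1:ℤ) - 2*N)*k) = ((k:ℤ) - N)^2 from by
      push_cast; linear_combination h2e]
    rw [show (-(N:ℤ) + k) = ((k:ℤ) - N) from by ring]
  rw [Finset.sum_congr rfl hterm] at key
  rw [← key]
  -- now massage the product side
  have hfac : ∀ k ∈ range (2*N), 1 + x * q^((1:ℤ) - 2*N) * (q^2)^k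
      = 1 + x * q^((1:ℤ) - 2*N + 2*(k:ℤ)) := by
    intro k _
    rw [show ((q:ℂ)^2)^k = q^((2*k : ℕ) : ℤ) from by rw [← pow_mul, zpow_natCast],
      mul_assoc, ← zpow_add₀ hq0]
    rw [show ((1:ℤ) - 2*N + (2*k : ℕ)) = ((1:ℤ) - 2*N + 2*(k:ℤ)) from by push_cast; ring]
  rw [Finset.prod_congr rfl hfac, show (2*N) = N + N from by ring, Finset.prod_range_add]
  have hblock2 : ∀ i ∈ range N, (1 + x * q^((1:ℤ) - 2*N + 2*((N + i : ℕ):ℤ)))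
      = 1 + x * q^(2*i+1) := by
    intro i _
    rw [show (1:ℤ) - 2*N + 2*((N+i : ℕ):ℤ) = ((2*i+1 : ℕ) : ℤ) from by push_cast; ring,
      zpow_natCast]
  have hblock1 : ∏ k ∈ range N, (1 + x * q^((1:ℤ) - 2*N + 2*(k:ℤ)))
      = (x^(N:ℤ) * q^(-(N:ℤ)^2)) * ∏ j ∈ range N, (1 + x⁻¹ * q^(2*j+1)) := by
    rw [← Finset.prod_range_reflect]
    have hre : ∀ j ∈ range N, (1 + x * q^((1:ℤ) - 2*N + 2*((N - 1 - j : ℕ):ℤ)))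
        = (x * q^(-(2*(j:ℤ)+1))) * (1 + x⁻¹ * q^(2*j+1)) := by
      intro j hj
      rw [mem_range] at hj
      have hc : ((N - 1 - j : ℕ) : ℤ) = (N:ℤ) - 1 - j := by omega
      rw [show (1:ℤ) - 2*N + 2*((N-1-j : ℕ):ℤ) = -(2*(j:ℤ)+1) from by rw [hc]; ring]
      have hinv : x * q^(-(2*(j:ℤ)+1)) * (x⁻¹ * q^(2*j+1)) = 1 := by
        rw [show (q:ℂ)^(2*j+1) = q^((2*(j:ℕ)+1 : ℕ) : ℤ) from (zpow_natCast q _).symm]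
        rw [show x * q^(-(2*(j:ℤ)+1)) * (x⁻¹ * q^(((2*j+1 : ℕ)) : ℤ))
          = (x * x⁻¹) * (q^(-(2*(j:ℤ)+1)) * q^(((2*j+1 : ℕ)) : ℤ)) from by ring]
        rw [mul_inv_cancel₀ hx, ← zpow_add₀ hq0]
        rw [show -(2*(j:ℤ)+1) + ((2*j+1 : ℕ) : ℤ) = 0 from by push_cast; ring]
        simp
      linear_combination -hinv
    rw [Finset.prod_congr rfl hre, Finset.prod_mul_distrib, Finset.prod_mul_distrib]
    rw [Finset.prod_const, ← zpow_sum₀ hq0]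
    congr 2
    · rw [Finset.card_range]
      exact (zpow_natCast x N).symm
    · rw [show (∑ i ∈ range N, -(2*(i:ℤ)+1)) = -(N:ℤ)^2 from by
        rw [Finset.sum_neg_distrib, sum_odd_range]]
  rw [hblock1, Finset.prod_congr rfl hblock2]
  rw [show q^((N:ℤ)^2) * x^(-(N:ℤ)) * (x^(N:ℤ) * q^(-(N:ℤ)^2)
      * (∏ j ∈ range N, (1 + x⁻¹ * q^(2*j+1))) * ∏ i ∈ range N, (1 + x * q^(2*i+1)))
    = (q^((N:ℤ)^2) * q^(-(N:ℤ)^2)) * (x^(-(N:ℤ)) * x^(N:ℤ))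
      * ((∏ j ∈ range N, (1 + x * q^(2*j+1))) * ∏ i ∈ range N, (1 + x⁻¹ * q^(2*i+1)))
    from by ring]
  rw [← zpow_add₀ hq0, ← zpow_add₀ hx]
  simp



variable {q x : ℂ}

lemma zpow_norm_le_max (hx : x ≠ 0) (m : ℤ) :
    ‖x ^ m‖ ≤ (max ‖x‖ ‖x‖⁻¹) ^ m.natAbs := by
  rw [norm_zpow]
  rcases Int.natAbs_eq m with h | h
  · calc ‖x‖ ^ m = ‖x‖ ^ ((m.natAbs : ℤ)) := by rw [← h]
      _ = ‖x‖ ^ m.natAbs := zpow_natCast _ _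
      _ ≤ _ := pow_le_pow_left₀ (norm_nonneg x) (le_max_left _ _) _
  · calc ‖x‖ ^ m = ‖x‖ ^ (-(m.natAbs:ℤ)) := by rw [← h]
      _ = (‖x‖⁻¹) ^ m.natAbs := by rw [zpow_neg, zpow_natCast, inv_pow]
      _ ≤ _ := pow_le_pow_left₀ (inv_nonneg.2 (norm_nonneg x)) (le_max_right _ _) _

lemma q_zpow_sq_norm (hq0 : q ≠ 0) (m : ℤ) : ‖q ^ (m^2)‖ = ‖q‖ ^ (m.natAbs^2) := by
  rw [norm_zpow, show m^2 = ((m.natAbs^2 : ℕ) : ℤ) from by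
    push_cast; rw [sq_abs], zpow_natCast]

lemma summable_boundaux (hq : ‖q‖ < 1) (hq0 : q ≠ 0) (r : ℝ) (hr : 0 < r) :
    Summable (fun n : ℕ => ‖q‖ ^ (n^2) * r ^ n) := by
  have ht0 : (0:ℝ) < ‖q‖ := norm_pos_iff.2 hq0
  obtain ⟨n₀, hn₀⟩ : ∃ n₀ : ℕ, ‖q‖ ^ n₀ * r ≤ 1/2 := by
    have h := (tendsto_pow_atTop_nhds_zero_of_lt_one (norm_nonneg q) hq).mul_const r
    rw [zero_mul] at h
    exact ((h.eventually (eventually_le_nhds (by norm_num : (0:ℝ) < 1/2))).exists)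
  rw [← summable_nat_add_iff n₀]
  refine Summable.of_nonneg_of_le (fun n => by positivity) (fun n => ?_)
    ((summable_geometric_of_lt_one (by norm_num) (by norm_num)) : Summable fun n : ℕ => (1/2:ℝ)^n)
  have h1 : ‖q‖ ^ ((n + n₀)^2) * r ^ (n + n₀) = (‖q‖ ^ (n+n₀) * r) ^ (n + n₀) := by
    rw [mul_pow, ← pow_mul, pow_two]
  rw [h1]
  calc (‖q‖ ^ (n+n₀) * r) ^ (n + n₀) ≤ (1/2 : ℝ) ^ (n + n₀) := by
        apply pow_le_pow_left₀ (by positivity)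
        calc ‖q‖ ^ (n+n₀) * r ≤ ‖q‖ ^ n₀ * r := by
              apply mul_le_mul_of_nonneg_right _ hr.le
              exact pow_le_pow_of_le_one (norm_nonneg q) hq.le (by omega)
          _ ≤ 1/2 := hn₀
    _ ≤ (1/2 : ℝ) ^ n := pow_le_pow_of_le_one (by norm_num) (by norm_num) (by omega)

theorem jtp (hq : ‖q‖ < 1) (hq0 : q ≠ 0) (hx : x ≠ 0) :
    ∑' m : ℤ, q^(m^2) * x^m
      = (∏' j:ℕ, (1 + (x*q) * (q^2)^j)) * (∏' j:ℕ, (1 + (x⁻¹*q) * (q^2)^j))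
        * (∏' j:ℕ, (1 + (-(q^2)) * (q^2)^j)) := by
  have hQ : ‖(q:ℂ)^2‖ < 1 := by
    rw [norm_pow]; exact pow_lt_one₀ (norm_nonneg q) hq (by omega)
  -- the three infinite products
  set F : ℂ := ∏' j:ℕ, (1 + (-(q^2)) * (q^2)^j) with hFdef
  set PA : ℂ := ∏' j:ℕ, (1 + (x*q) * (q^2)^j) with hPAdef
  set PB : ℂ := ∏' j:ℕ, (1 + (x⁻¹*q) * (q^2)^j) with hPBdef
  have hFm : Multipliable (fun j : ℕ => 1 + (-(q^2)) * (q^2)^j) :=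
    multipliable_one_add _ _ hQ
  have hPAm : Multipliable (fun j : ℕ => 1 + (x*q) * (q^2)^j) :=
    multipliable_one_add _ _ hQ
  have hPBm : Multipliable (fun j : ℕ => 1 + (x⁻¹*q) * (q^2)^j) :=
    multipliable_one_add _ _ hQ
  have hFne : F ≠ 0 := by
    apply tprod_one_add_ne_zero _ _ hQ
    intro j h
    have h2 : ‖((q:ℂ)^2)^(j+1)‖ < 1 := by
      rw [norm_pow]; exact pow_lt_one₀ (norm_nonneg _) hQ (by omega)
    have h3 : ((q:ℂ)^2)^(j+1) = 1 := by rw [pow_succ']; linear_combination -h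
    rw [h3, norm_one] at h2
    exact lt_irrefl _ h2
  -- partial products of fp converge to F
  have hfp_eq : ∀ n : ℕ, fp (q^2) n = ∏ j ∈ range n, (1 + (-(q^2)) * (q^2)^j) := by
    intro n
    apply Finset.prod_congr rfl
    intro j _
    rw [pow_succ']
    ring
  have hfpF : Tendsto (fun n => fp (q^2) n) atTop (nhds F) := by
    have := hFm.hasProd.tendsto_prod_nat
    exact this.congr (fun n => (hfp_eq n).symm)
  have hPAt : Tendsto (fun N => ∏ j ∈ range N, (1 + x * q^(2*j+1))) atTop (nhds PA) := by
    have := hPAm.hasProd.tendsto_prod_nat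
    apply this.congr
    intro N
    apply Finset.prod_congr rfl
    intro j _
    rw [show (q:ℂ)^(2*j+1) = q * (q^2)^j from by rw [pow_succ, pow_mul]; ring]
    ring
  have hPBt : Tendsto (fun N => ∏ j ∈ range N, (1 + x⁻¹ * q^(2*j+1))) atTop (nhds PB) := by
    have := hPBm.hasProd.tendsto_prod_nat
    apply this.congr
    intro N
    apply Finset.prod_congr rfl
    intro j _
    rw [show (q:ℂ)^(2*j+1) = q * (q^2)^j from by rw [pow_succ, pow_mul]; ring]
    ring
  -- gb limit
  have h2N : Tendsto (fun N : ℕ => 2*N) atTop atTop :=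
    tendsto_atTop_atTop.2 fun b => ⟨b, fun N hN => by omega⟩
  have hgb : ∀ m : ℤ, Tendsto (fun N : ℕ => gb (q^2) (2*N) ((m + N).toNat)) atTop
      (nhds F⁻¹) := by
    intro m
    have hcomp1 : Tendsto (fun N : ℕ => (m + N).toNat) atTop atTop :=
      tendsto_atTop_atTop.2 fun b => ⟨b + m.natAbs, fun N hN => by omega⟩
    have hcomp2 : Tendsto (fun N : ℕ => (N - m).toNat) atTop atTop :=
      tendsto_atTop_atTop.2 fun b => ⟨b + m.natAbs, fun N hN => by omega⟩
    have hlim : Tendsto (fun N : ℕ =>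
        fp (q^2) (2*N) * (fp (q^2) ((m+N).toNat))⁻¹ * (fp (q^2) ((N-m).toNat))⁻¹) atTop
        (nhds (F * F⁻¹ * F⁻¹)) := by
      exact ((hfpF.comp h2N).mul ((hfpF.comp hcomp1).inv₀ hFne)).mul
        ((hfpF.comp hcomp2).inv₀ hFne)
    have hval : F * F⁻¹ * F⁻¹ = F⁻¹ := by field_simp
    rw [hval] at hlim
    apply hlim.congr'
    filter_upwards [Filter.eventually_ge_atTop m.natAbs] with N hN
    have hk : (m + N).toNat ≤ 2*N := by omega
    have hsub : 2*N - (m + N).toNat = (N - m).toNat := by omega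
    have h := gb_mul_fp (q^2) (2*N) ((m+N).toNat) hk
    rw [hsub] at h
    have hk0 : fp (q^2) ((m+(N:ℤ)).toNat) ≠ 0 := fp_ne_zero hQ _
    have hs0 : fp (q^2) (((N:ℤ)-m).toNat) ≠ 0 := fp_ne_zero hQ _
    rw [← h]
    field_simp
  -- dominated convergence setup
  set Kc : ℝ := ‖F‖ * (cUp (q^2) / (cLow (q^2) * cLow (q^2))) with hKc
  set r : ℝ := max ‖x‖ ‖x‖⁻¹ with hr
  have hrpos : 0 < r := lt_max_of_lt_left (norm_pos_iff.2 hx)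
  set bound : ℤ → ℝ := fun m => Kc * (‖q‖ ^ (m.natAbs^2) * r ^ m.natAbs) with hbound
  have hbsum : Summable bound := by
    apply Summable.mul_left
    apply Summable.of_nat_of_neg <;>
      simpa using summable_boundaux hq hq0 r hrpos
  set f : ℕ → ℤ → ℂ := fun N m =>
    if m.natAbs ≤ N then F * (gb (q^2) (2*N) ((m + N).toNat) * q^(m^2) * x^m) else 0
    with hf
  have hpt : ∀ m : ℤ, Tendsto (f · m) atTop (nhds (q^(m^2) * x^m)) := by
    intro m
    have h1 : Tendsto (fun N : ℕ => F * (gb (q^2) (2*N) ((m + N).toNat) * q^(m^2) * x^m))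
        atTop (nhds (F * (F⁻¹ * q^(m^2) * x^m))) :=
      tendsto_const_nhds.mul (((hgb m).mul_const _).mul_const _)
    have h2 : F * (F⁻¹ * q^(m^2) * x^m) = q^(m^2) * x^m := by
      field_simp
    rw [h2] at h1
    apply h1.congr'
    filter_upwards [Filter.eventually_ge_atTop m.natAbs] with N hN
    rw [hf]
    simp only [if_pos hN]
  have hbd : ∀ N : ℕ, ∀ m : ℤ, ‖f N m‖ ≤ bound m := by
    intro N m
    rw [hf]
    by_cases hm : m.natAbs ≤ N
    · simp only [if_pos hm]
      rw [norm_mul, norm_mul, norm_mul]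
      rw [hbound, hKc]
      have hgbn : ‖gb (q^2) (2*N) ((m + N).toNat)‖ ≤ cUp (q^2) / (cLow (q^2) * cLow (q^2)) :=
        gb_norm_le hQ (by omega)
      have hq2 : ‖q ^ (m^2)‖ = ‖q‖ ^ (m.natAbs^2) := q_zpow_sq_norm hq0 m
      have hx2 : ‖x ^ m‖ ≤ r ^ m.natAbs := zpow_norm_le_max hx m
      have hcl : (0:ℝ) < cLow (q^2) := cLow_pos
      have hcu : (0:ℝ) < cUp (q^2) / (cLow (q^2) * cLow (q^2)) :=
        div_pos (Real.exp_pos _) (mul_pos hcl hcl)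
      calc ‖F‖ * (‖gb (q^2) (2*N) ((m + N).toNat)‖ * ‖q ^ (m^2)‖ * ‖x ^ m‖)
          ≤ ‖F‖ * ((cUp (q^2) / (cLow (q^2) * cLow (q^2))) * ‖q‖ ^ (m.natAbs^2) * (r ^ m.natAbs)) := by
            apply mul_le_mul_of_nonneg_left _ (norm_nonneg F)
            rw [hq2]
            apply mul_le_mul (mul_le_mul_of_nonneg_right hgbn (by positivity)) hx2
              (norm_nonneg _) (mul_nonneg hcu.le (by positivity))
        _ = ‖F‖ * (cUp (q^2) / (cLow (q^2) * cLow (q^2))) * (‖q‖ ^ (m.natAbs^2) * r ^ m.natAbs) := by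
            ring
    · simp only [if_neg hm, norm_zero]
      simp only [hbound, hKc]
      have hcl : (0:ℝ) < cLow (q^2) := cLow_pos
      exact mul_nonneg (mul_nonneg (norm_nonneg F)
        (div_pos (Real.exp_pos _) (mul_pos hcl hcl)).le) (by positivity)
  have hDCT := tendsto_tsum_of_dominated_convergence hbsum hpt
    (Filter.Eventually.of_forall hbd)
  -- identify the partial sums
  have hsum_eq : ∀ N : ℕ, (∑' m : ℤ, f N m)
      = F * ((∏ j ∈ range N, (1 + x * q^(2*j+1))) * (∏ j ∈ range N, (1 + x⁻¹ * q^(2*j+1)))) := by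
    intro N
    rw [← finiteJTP hq0 hx N, Finset.mul_sum]
    rw [tsum_eq_sum (s := Finset.Icc (-(N:ℤ)) N)
      (fun m hm => by rw [hf]; exact if_neg (by simp at hm; omega))]
    refine Finset.sum_nbij' (i := fun (m : ℤ) => (m + N).toNat)
      (j := fun (k : ℕ) => (k : ℤ) - N) ?_ ?_ ?_ ?_ ?_
    · intro m hm
      simp only [Finset.mem_Icc] at hm
      simp only [Finset.mem_range]
      omega
    · intro k hk
      simp only [Finset.mem_range] at hk
      simp only [Finset.mem_Icc]
      omega
    · intro m hm
      simp only [Finset.mem_Icc] at hm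
      beta_reduce
      omega
    · intro k hk
      simp only [Finset.mem_range] at hk
      beta_reduce
      omega
    · intro m hm
      simp only [Finset.mem_Icc] at hm
      beta_reduce
      rw [hf]
      simp only [if_pos (show m.natAbs ≤ N by omega)]
      rw [show (((m + N).toNat : ℤ)) = m + N from by omega]
      rw [show (m : ℤ) + N - N = m from by ring]
  have hfin : Tendsto (fun N => ∑' m : ℤ, f N m) atTop
      (nhds (F * (PA * PB))) := by
    have h := (hPAt.mul hPBt).const_mul F
    exact h.congr (fun N => (hsum_eq N).symm)
  rw [tendsto_nhds_unique hDCT hfin]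
  ring


end JTPaux

/-- Jacobi theta function with characteristics:
`ϑ[γ₁,γ₂](ξ,τ) = Σ_{m∈ℤ} exp(iπ(m+γ₁)²τ + 2iπ(m+γ₁)(ξ+γ₂))`. -/
noncomputable def jTheta (γ₁ γ₂ : ℝ) (ξ τ : ℂ) : ℂ :=
  ∑' m : ℤ, Complex.exp (Real.pi * Complex.I * ((m : ℂ) + (γ₁ : ℂ)) ^ 2 * τ
    + 2 * Real.pi * Complex.I * ((m : ℂ) + (γ₁ : ℂ)) * (ξ + (γ₂ : ℂ)))

/-- Infinite `q`-Pochhammer symbol `(z;p)_∞ = ∏_{j≥0} (1 − z pʲ)`. -/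
noncomputable def qPoch (z p : ℂ) : ℂ := ∏' j : ℕ, (1 - z * p ^ j)

/-- Jacobi Θ function `Θ_p(z) = (z;p)_∞ (p z⁻¹;p)_∞ (p;p)_∞`. -/
noncomputable def ThetaF (p z : ℂ) : ℂ := qPoch z p * qPoch (p * z⁻¹) p * qPoch p p

/-- Expression of the theta function with characteristics in terms of the Jacobi Θ
function: with `p = e^{2iπτ}` and `z = e^{iπξ}`,
`ϑ[γ₁,γ₂](ξ,τ) = (−1)^{2γ₁γ₂} p^{γ₁²/2} z^{2γ₁} Θ_p(−e^{2iπγ₂} p^{γ₁+1/2} z²)`,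
all fractional powers being interpreted as the indicated exponentials. -/
theorem jTheta_eq_ThetaF (γ₁ γ₂ : ℝ) (τ : ℂ) (hτ : 0 < τ.im) (ξ : ℂ) :
    jTheta γ₁ γ₂ ξ τ
      = Complex.exp (2 * Real.pi * Complex.I * (γ₁ : ℂ) * (γ₂ : ℂ))
        * Complex.exp (Real.pi * Complex.I * (γ₁ : ℂ) ^ 2 * τ)
        * Complex.exp (2 * Real.pi * Complex.I * (γ₁ : ℂ) * ξ)
        * ThetaF (Complex.exp (2 * Real.pi * Complex.I * τ))
            (-(Complex.exp (2 * Real.pi * Complex.I * (γ₂ : ℂ))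
              * Complex.exp (Real.pi * Complex.I * (2 * (γ₁ : ℂ) + 1) * τ)
              * Complex.exp (2 * Real.pi * Complex.I * ξ))) := by
  set π : ℝ := Real.pi with hπ
  set I : ℂ := Complex.I with hI
  set q : ℂ := Complex.exp (π * I * τ) with hqdef
  set x : ℂ := Complex.exp (2 * π * I * ((γ₁:ℂ) * τ + ξ + (γ₂:ℂ))) with hxdef
  have hq0 : q ≠ 0 := Complex.exp_ne_zero _
  have hx0 : x ≠ 0 := Complex.exp_ne_zero _
  have hq : ‖q‖ < 1 := by
    rw [hqdef, Complex.norm_exp]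
    rw [Real.exp_lt_one_iff]
    have : ((π:ℂ) * I * τ).re = -(π * τ.im) := by
      simp [hI, Complex.mul_re, Complex.mul_im]
    rw [this]
    have := Real.pi_pos
    nlinarith
  set E : ℂ := Complex.exp (π * I * (γ₁:ℂ)^2 * τ + 2 * π * I * (γ₁:ℂ) * ξ
    + 2 * π * I * (γ₁:ℂ) * (γ₂:ℂ)) with hEdef
  -- step 1 : left side
  have hL : jTheta γ₁ γ₂ ξ τ = E * ∑' m : ℤ, q^(m^2) * x^m := by
    rw [jTheta, ← tsum_mul_left]
    apply tsum_congr
    intro m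
    rw [hqdef, hxdef, hEdef, ← Complex.exp_int_mul, ← Complex.exp_int_mul,
      ← Complex.exp_add, ← Complex.exp_add]
    congr 1
    push_cast
    ring
  -- step 2 : the products
  have hp2 : Complex.exp (2 * (π:ℂ) * I * τ) = q^2 := by
    rw [hqdef, pow_two, ← Complex.exp_add]
    congr 1
    ring
  have hz : Complex.exp (2 * (π:ℂ) * I * (γ₂:ℂ))
      * Complex.exp ((π:ℂ) * I * (2 * (γ₁:ℂ) + 1) * τ)
      * Complex.exp (2 * (π:ℂ) * I * ξ) = x * q := by
    rw [hqdef, hxdef, ← Complex.exp_add, ← Complex.exp_add, ← Complex.exp_add]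
    congr 1
    ring
  rw [hL, hp2, hz]
  have hqA : qPoch (-(x*q)) (q^2) = ∏' j:ℕ, (1 + (x*q) * (q^2)^j) := by
    rw [qPoch]; apply tprod_congr; intro j; ring
  have hinvz : (q:ℂ)^2 * (-(x*q))⁻¹ = -(x⁻¹*q) := by
    field_simp
  have hqB : qPoch ((q:ℂ)^2 * (-(x*q))⁻¹) (q^2) = ∏' j:ℕ, (1 + (x⁻¹*q) * (q^2)^j) := by
    rw [hinvz, qPoch]; apply tprod_congr; intro j; ring
  have hqC : qPoch ((q:ℂ)^2) (q^2) = ∏' j:ℕ, (1 + (-(q^2)) * (q^2)^j) := by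
    rw [qPoch]; apply tprod_congr; intro j; ring
  rw [ThetaF, hqA, hqB, hqC, JTPaux.jtp hq hq0 hx0]
  rw [show Complex.exp (2*(π:ℂ)*I*(γ₁:ℂ)*(γ₂:ℂ)) * Complex.exp ((π:ℂ)*I*(γ₁:ℂ)^2*τ)
      * Complex.exp (2*(π:ℂ)*I*(γ₁:ℂ)*ξ) = E from by
    rw [hEdef, ← Complex.exp_add, ← Complex.exp_add]
    congr 1
    ring]
end

section
/- Let k ≥ 1 be an integer, η ∈ ℝ, and z ∈ ℂ with |z| < 1. For ε > 0 set p = 1 + ε and q = 1 + ηε, and define E_k(z; p, q) = exp( Σ_{ℓ=1}^∞ [(1 − p^{−kℓ})(1 − (p^k q²)^ℓ)/(1 + q^{2ℓ})] · z^ℓ/ℓ ). Then there is ε₀ > 0 such that the series converges absolutely for all 0 < ε < ε₀, and lim_{ε→0⁺} (E_k(z; 1+ε, 1+ηε) − 1)/ε² = −(k(k+2η)/2) · z/(1−z)². -/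
/-- The `ℓ`-th term of the series defining `g^{(k)}`:
`(1 − p^{−kℓ})(1 − (pᵏq²)^ℓ)/(1 + q^{2ℓ}) · z^ℓ/ℓ`. -/
noncomputable def Eterm (k : ℕ) (p q : ℝ) (z : ℂ) (l : ℕ) : ℂ :=
  (1 - (p : ℂ) ^ (-((k : ℤ) * l))) * (1 - ((p : ℂ) ^ k * (q : ℂ) ^ 2) ^ l)
    / (1 + (q : ℂ) ^ (2 * l)) * z ^ l / (l : ℂ)

/-- The structure-function factor
`E_k(z;p,q) = exp( Σ_{ℓ≥1} (1 − p^{−kℓ})(1 − (pᵏq²)^ℓ)/(1 + q^{2ℓ}) · z^ℓ/ℓ )`. -/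
noncomputable def Efun (k : ℕ) (p q : ℝ) (z : ℂ) : ℂ :=
  Complex.exp (∑' l : ℕ, Eterm k p q z (l + 1))

open Filter Topology

lemma aux_pow_le (x : ℝ) (h0 : 0 ≤ x) (h1 : x ≤ 1) (n : ℕ) : (1+x)^n ≤ 1 + (2^n - 1)*x := by
  induction n with
  | zero => norm_num
  | succ n ih =>
    have h2 : (0:ℝ) < 2^n := by positivity
    have hpow : (1+x)^(n+1) = (1+x)^n * (1+x) := by ring
    rw [hpow]
    have hx : (0:ℝ) ≤ 1 + x := by linarith
    have h3 : (1:ℝ) ≤ 2^n := one_le_pow₀ one_le_two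
    have h4 : x*x ≤ x := by nlinarith
    have h5 : (2:ℝ)^(n+1) = 2*2^n := by rw [pow_succ]; ring
    nlinarith [mul_le_mul_of_nonneg_right ih hx,
      mul_le_mul_of_nonneg_left h4 (by linarith : (0:ℝ) ≤ 2^n - 1)]

lemma aux_one_sub_pow (u : ℝ) (h0 : 0 ≤ u) (h1 : u ≤ 1) (n : ℕ) : 1 - u^n ≤ n*(1-u) := by
  induction n with
  | zero => norm_num
  | succ n ih =>
    have hu : u^n ≤ 1 := pow_le_one₀ h0 h1
    have hun : 0 ≤ u^n := pow_nonneg h0 n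
    have hp : u^(n+1) = u^n * u := by ring
    push_cast
    nlinarith

lemma aux_abs_pow_sub_one (a : ℝ) (n : ℕ) : |a^n - 1| ≤ n * (max 1 |a|)^n * |a - 1| := by
  have h := geom_sum_mul a n
  have h2 : a^n - 1 = (∑ i ∈ Finset.range n, a^i) * (a - 1) := h.symm
  rw [h2, abs_mul]
  gcongr
  calc |∑ i ∈ Finset.range n, a^i| ≤ ∑ i ∈ Finset.range n, |a^i| := Finset.abs_sum_le_sum_abs _ _
    _ ≤ ∑ i ∈ Finset.range n, (max 1 |a|)^n := by
        apply Finset.sum_le_sum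
        intro i hi
        rw [abs_pow]
        apply pow_le_pow_left₀ (abs_nonneg a) (le_max_right 1 _) i |>.trans
        exact pow_le_pow_right₀ (le_max_left 1 _) (Finset.mem_range.mp hi).le
    _ = n * (max 1 |a|)^n := by rw [Finset.sum_const, Finset.card_range]; ring

lemma Eterm_eq (k : ℕ) (p q : ℝ) (z : ℂ) (m : ℕ) :
    Eterm k p q z m =
      (((1 - p ^ (-((k:ℤ) * m))) * (1 - (p^k * q^2)^m) / (1 + q^(2*m)) : ℝ) : ℂ)
        * z^m / (m : ℂ) := by
  unfold Eterm
  push_cast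
  ring

lemma Eterm_norm (k : ℕ) (p q : ℝ) (z : ℂ) (m : ℕ) :
    ‖Eterm k p q z m‖ =
      |(1 - p ^ (-((k:ℤ) * m))) * (1 - (p^k * q^2)^m) / (1 + q^(2*m))|
        * ‖z‖^m / m := by
  rw [Eterm_eq, norm_div, norm_mul, Complex.norm_real, norm_pow,
    Complex.norm_natCast, Real.norm_eq_abs]

lemma Eterm_bound (k m : ℕ) (hk : 1 ≤ k) (hm : 1 ≤ m) (η : ℝ) (z : ℂ) (ε : ℝ)
    (hε : 0 < ε) (hε1 : ε ≤ 1) :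
    ‖Eterm k (1+ε) (1+η*ε) z m‖ ≤
      ε^2 * ((k : ℝ) * (2^k - 1 + 2^k*(2*|η| + η^2)) * m^2
        * ((1+(2^k - 1 + 2^k*(2*|η| + η^2))*ε)*‖z‖)^m) := by
  set C : ℝ := 2^k - 1 + 2^k*(2*|η| + η^2) with hCdef
  have h2k : (1:ℝ) ≤ 2^k := one_le_pow₀ one_le_two
  have hC0 : 0 ≤ C := by
    have h' : (0:ℝ) ≤ 2^k*(2*|η| + η^2) := by positivity
    rw [hCdef]; linarith
  have hp : (1:ℝ) ≤ 1+ε := by linarith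
  -- c1 bounds
  have hzpow : (1+ε:ℝ) ^ (-((k:ℤ) * m)) = ((1+ε)⁻¹)^(k*m) := by
    rw [show (-((k:ℤ)*m)) = -((k*m : ℕ) : ℤ) by push_cast; ring, zpow_neg, zpow_natCast,
      ← inv_pow]
  have hu0 : (0:ℝ) ≤ (1+ε)⁻¹ := by positivity
  have hu1 : (1+ε)⁻¹ ≤ 1 := inv_le_one_of_one_le₀ hp
  have h1u : 1 - (1+ε)⁻¹ ≤ ε := by
    have h' : 1 - (1+ε)⁻¹ = ε/(1+ε) := by field_simp; ring
    rw [h']; exact div_le_self hε.le hp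
  have hc1a : 0 ≤ 1 - (1+ε) ^ (-((k:ℤ)*m)) := by
    rw [hzpow]
    have := pow_le_one₀ hu0 hu1 (n := k*m)
    linarith
  have hc1b : 1 - (1+ε) ^ (-((k:ℤ)*m)) ≤ (k:ℝ)*m*ε := by
    rw [hzpow]
    calc 1 - ((1+ε)⁻¹)^(k*m) ≤ ((k*m : ℕ):ℝ)*(1-(1+ε)⁻¹) :=
          aux_one_sub_pow _ hu0 hu1 (k*m)
      _ ≤ ((k*m : ℕ):ℝ)*ε := by
          apply mul_le_mul_of_nonneg_left h1u (by positivity)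
      _ = (k:ℝ)*m*ε := by push_cast; ring
  -- c2 bounds
  have ha0 : (0:ℝ) ≤ (1+ε)^k * (1+η*ε)^2 := by positivity
  have hq2 : |(1+η*ε)^2 - 1| ≤ (2*|η| + η^2)*ε := by
    have hx : (1+η*ε)^2 - 1 = (2*η + η^2*ε)*ε := by ring
    rw [hx, abs_mul, abs_of_pos hε]
    apply mul_le_mul_of_nonneg_right _ hε.le
    calc |2*η + η^2*ε| ≤ |2*η| + |η^2*ε| := abs_add_le _ _
      _ = 2*|η| + η^2*ε := by
          rw [abs_mul, abs_mul, abs_of_pos hε, abs_of_nonneg (sq_nonneg η)]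
          norm_num
      _ ≤ 2*|η| + η^2 := by nlinarith [sq_nonneg η]
  have hpk : (1+ε)^k ≤ 2^k := by
    calc (1+ε)^k ≤ 1+(2^k-1)*ε := aux_pow_le ε hε.le hε1 k
      _ ≤ 2^k := by nlinarith
  have hpk0 : (0:ℝ) ≤ (1+ε)^k - 1 := by
    have := one_le_pow₀ hp (n := k)
    linarith
  have hpk1 : |(1+ε)^k - 1| ≤ (2^k - 1)*ε := by
    rw [abs_of_nonneg hpk0]
    have := aux_pow_le ε hε.le hε1 k
    linarith
  have haC : |(1+ε)^k * (1+η*ε)^2 - 1| ≤ C*ε := by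
    have hsplit : (1+ε)^k * (1+η*ε)^2 - 1
        = (1+ε)^k * ((1+η*ε)^2 - 1) + ((1+ε)^k - 1) := by ring
    rw [hsplit]
    calc |(1+ε)^k * ((1+η*ε)^2 - 1) + ((1+ε)^k - 1)|
        ≤ |(1+ε)^k * ((1+η*ε)^2-1)| + |(1+ε)^k - 1| := abs_add_le _ _
      _ ≤ 2^k * ((2*|η|+η^2)*ε) + (2^k-1)*ε := by
          rw [abs_mul, abs_of_nonneg (by positivity : (0:ℝ) ≤ (1+ε)^k)]
          exact add_le_add
            (mul_le_mul hpk hq2 (abs_nonneg _) (by positivity)) hpk1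
      _ = C*ε := by rw [hCdef]; ring
  have hmax : max 1 |(1+ε)^k*(1+η*ε)^2| ≤ 1 + C*ε := by
    rw [abs_of_nonneg ha0]
    apply max_le (by nlinarith) _
    have h2 := (abs_le.mp haC).2
    linarith
  have hc2 : |1 - ((1+ε)^k*(1+η*ε)^2)^m| ≤ (m:ℝ) * (1+C*ε)^m * (C*ε) := by
    rw [abs_sub_comm]
    calc |((1+ε)^k*(1+η*ε)^2)^m - 1|
        ≤ (m:ℝ)*(max 1 |(1+ε)^k*(1+η*ε)^2|)^m*|(1+ε)^k*(1+η*ε)^2-1| :=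
          aux_abs_pow_sub_one _ m
      _ ≤ (m:ℝ) * (1+C*ε)^m * (C*ε) := by
          have hmax0 : (0:ℝ) ≤ max 1 |(1+ε)^k*(1+η*ε)^2| := le_trans zero_le_one (le_max_left _ _)
          gcongr
  -- c3
  have hc3 : (1:ℝ) ≤ 1 + (1+η*ε)^(2*m) := by
    have h' : (0:ℝ) ≤ ((1+η*ε)^2)^m := by positivity
    rw [pow_mul]; linarith
  -- assemble
  rw [Eterm_norm]
  have habs : |(1 - (1+ε) ^ (-((k:ℤ)*m))) * (1 - ((1+ε)^k*(1+η*ε)^2)^m) / (1 + (1+η*ε)^(2*m))|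
      ≤ ((k:ℝ)*m*ε) * ((m:ℝ)*(1+C*ε)^m*(C*ε)) := by
    rw [abs_div, abs_mul]
    calc |1 - (1+ε) ^ (-((k:ℤ)*m))| * |1 - ((1+ε)^k*(1+η*ε)^2)^m| / |1 + (1+η*ε)^(2*m)|
        ≤ |1 - (1+ε) ^ (-((k:ℤ)*m))| * |1 - ((1+ε)^k*(1+η*ε)^2)^m| := by
          apply div_le_self (by positivity)
          rw [abs_of_nonneg (by linarith)]
          exact hc3
      _ ≤ ((k:ℝ)*m*ε) * ((m:ℝ)*(1+C*ε)^m*(C*ε)) := by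
          apply mul_le_mul _ hc2 (abs_nonneg _) (by positivity)
          rw [abs_of_nonneg hc1a]; exact hc1b
  calc |(1 - (1+ε) ^ (-((k:ℤ)*m))) * (1 - ((1+ε)^k*(1+η*ε)^2)^m) / (1 + (1+η*ε)^(2*m))|
        * ‖z‖^m / m
      ≤ |(1 - (1+ε) ^ (-((k:ℤ)*m))) * (1 - ((1+ε)^k*(1+η*ε)^2)^m) / (1 + (1+η*ε)^(2*m))|
        * ‖z‖^m := by
        apply div_le_self (by positivity)
        exact_mod_cast hm
    _ ≤ (((k:ℝ)*m*ε) * ((m:ℝ)*(1+C*ε)^m*(C*ε))) * ‖z‖^m := by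
        apply mul_le_mul_of_nonneg_right habs (by positivity)
    _ = ε^2 * ((k:ℝ) * C * m^2 * ((1+C*ε)*‖z‖)^m) := by
        rw [mul_pow]; ring

-- slope limit helper : from HasDerivAt f d 0 (ℝ → ℂ) with f 0 = 1,
-- get Tendsto (fun ε => (1 - f ε)/ε) (𝓝[>]0) (𝓝 (-d))
lemma slope_limit {f : ℝ → ℂ} {d : ℂ} (hf : HasDerivAt f d 0) (hf0 : f 0 = 1) :
    Filter.Tendsto (fun ε : ℝ => (1 - f ε)/(ε:ℂ)) (nhdsWithin 0 (Set.Ioi 0)) (nhds (-d)) := by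
  have h := hasDerivAt_iff_tendsto_slope.mp hf
  have h2 : Filter.Tendsto (fun ε : ℝ => -(slope f 0 ε)) (nhdsWithin 0 {(0:ℝ)}ᶜ) (nhds (-d)) := h.neg
  have h3 : Filter.Tendsto (fun ε : ℝ => (1 - f ε)/(ε:ℂ)) (nhdsWithin 0 {(0:ℝ)}ᶜ) (nhds (-d)) := by
    apply h2.congr'
    filter_upwards [self_mem_nhdsWithin] with ε hε
    have hε0 : (ε:ℂ) ≠ 0 := by exact_mod_cast (Set.mem_compl_singleton_iff.mp hε)
    rw [slope_def_module, hf0, sub_zero, Complex.real_smul]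
    field_simp
    rw [Complex.ofReal_div, Complex.ofReal_one, one_div, mul_comm, ← mul_assoc, mul_inv_cancel₀ hε0]; ring
  exact h3.mono_left (nhdsWithin_mono 0 (fun x hx => ne_of_gt hx))

lemma limA (n : ℕ) :
    Filter.Tendsto (fun ε : ℝ => (1 - (1+(ε:ℂ)) ^ (-(n:ℤ)))/(ε:ℂ))
      (nhdsWithin 0 (Set.Ioi 0)) (nhds (n:ℂ)) := by
  have inner : HasDerivAt (fun w : ℂ => 1 + w) 1 0 := (hasDerivAt_id (0:ℂ)).const_add 1
  have outer : HasDerivAt (fun x : ℂ => x ^ (-(n:ℤ))) ((-(n:ℤ)) * 1 ^ (-(n:ℤ)-1)) ((fun w : ℂ => 1 + w) 0) := by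
    simpa using hasDerivAt_zpow (-(n:ℤ)) (1:ℂ) (Or.inl one_ne_zero)
  have hcomp : HasDerivAt (fun w : ℂ => (1+w) ^ (-(n:ℤ))) (-(n:ℂ)) 0 := by
    have := outer.comp 0 inner
    simpa [Function.comp_def] using this
  have hreal : HasDerivAt (fun ε : ℝ => (1+(ε:ℂ)) ^ (-(n:ℤ))) (-(n:ℂ)) 0 := by
    apply HasDerivAt.comp_ofReal (e := fun w : ℂ => (1+w) ^ (-(n:ℤ))) (by simpa using hcomp)
  have := slope_limit hreal (by simp)
  simpa using this

lemma limB (k m : ℕ) (η : ℝ) :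
    Filter.Tendsto (fun ε : ℝ => (1 - ((1+(ε:ℂ))^k * (1+(η:ℂ)*ε)^2)^m)/(ε:ℂ))
      (nhdsWithin 0 (Set.Ioi 0)) (nhds (-((m:ℂ)*((k:ℂ)+2*(η:ℂ))))) := by
  have h1 : HasDerivAt (fun w : ℂ => (1+w)^k) (k:ℂ) 0 := by
    have := ((hasDerivAt_id (0:ℂ)).const_add 1).fun_pow k
    simpa using this
  have h2 : HasDerivAt (fun w : ℂ => (1+(η:ℂ)*w)^2) (2*(η:ℂ)) 0 := by
    have base : HasDerivAt (fun w : ℂ => 1+(η:ℂ)*w) (η:ℂ) 0 := by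
      simpa using ((hasDerivAt_id (0:ℂ)).const_mul (η:ℂ)).const_add 1
    simpa using base.fun_pow 2
  have hu : HasDerivAt (fun w : ℂ => (1+w)^k * (1+(η:ℂ)*w)^2) ((k:ℂ)+2*(η:ℂ)) 0 := by
    simpa using h1.fun_mul h2
  have hF : HasDerivAt (fun w : ℂ => ((1+w)^k * (1+(η:ℂ)*w)^2)^m) ((m:ℂ)*((k:ℂ)+2*(η:ℂ))) 0 := by
    simpa using hu.fun_pow m
  have hreal : HasDerivAt (fun ε : ℝ => ((1+(ε:ℂ))^k * (1+(η:ℂ)*ε)^2)^m) ((m:ℂ)*((k:ℂ)+2*(η:ℂ))) 0 := by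
    apply HasDerivAt.comp_ofReal (e := fun w : ℂ => ((1+w)^k * (1+(η:ℂ)*w)^2)^m) (by simpa using hF)
  have := slope_limit hreal (by norm_num)
  simpa using this

lemma Eterm_pointwise (k m : ℕ) (η : ℝ) (z : ℂ) (hm : 1 ≤ m) :
    Filter.Tendsto (fun ε : ℝ => Eterm k (1+ε) (1+η*ε) z m / (ε:ℂ)^2)
      (nhdsWithin 0 (Set.Ioi 0))
      (nhds (-(((k:ℂ)*((k:ℂ)+2*(η:ℂ)))/2) * m * z^m)) := by
  have hm0 : (m:ℂ) ≠ 0 := Nat.cast_ne_zero.mpr (by omega)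
  have hA := limA (k*m)
  have hB := limB k m η
  have hD : Filter.Tendsto (fun ε : ℝ => (1 + (1+(η:ℂ)*ε)^(2*m)))
      (nhdsWithin 0 (Set.Ioi 0)) (nhds 2) := by
    have hcont : Continuous (fun ε : ℝ => (1 + (1+(η:ℂ)*ε)^(2*m))) := by continuity
    have h := (hcont.tendsto 0).mono_left (nhdsWithin_le_nhds (s := Set.Ioi 0))
    norm_num at h
    exact h
  have hthird : Filter.Tendsto (fun ε : ℝ => z^m / ((m:ℂ) * (1 + (1+(η:ℂ)*ε)^(2*m))))
      (nhdsWithin 0 (Set.Ioi 0)) (nhds (z^m / ((m:ℂ)*2))) := by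
    apply Filter.Tendsto.div tendsto_const_nhds (hD.const_mul (m:ℂ))
    simp [hm0]
  have key := (hA.mul hB).mul hthird
  have hval : ((k*m : ℕ):ℂ) * (-((m:ℂ)*((k:ℂ)+2*(η:ℂ)))) * (z^m / ((m:ℂ)*2))
      = -(((k:ℂ)*((k:ℂ)+2*(η:ℂ)))/2) * m * z^m := by
    push_cast
    field_simp
  rw [hval] at key
  apply key.congr'
  filter_upwards [self_mem_nhdsWithin] with ε hε
  have hε0 : (ε:ℂ) ≠ 0 := Complex.ofReal_ne_zero.mpr (ne_of_gt hε)
  have hD0 : ((1:ℂ) + (1+(η:ℂ)*ε)^(2*m)) ≠ 0 := by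
    have h0 : (0:ℝ) < 1 + ((1+η*ε)^2)^m := by positivity
    have heq : ((1:ℂ) + (1+(η:ℂ)*ε)^(2*m)) = ((1 + ((1+η*ε)^2)^m : ℝ) : ℂ) := by
      push_cast [pow_mul]
      ring
    rw [heq]
    exact_mod_cast h0.ne'
  unfold Eterm
  push_cast
  field_simp

set_option maxHeartbeats 2000000 in
/-- Scaling limit of `g^{(k)}`: with `p = 1 + ε`, `q = 1 + ηε`, the series converges
absolutely for small `ε > 0` and
`lim_{ε→0⁺} (E_k(z;1+ε,1+ηε) − 1)/ε² = −(k(k+2η)/2) · z/(1−z)²`. -/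
theorem scaling_limit_gk (k : ℕ) (hk : 1 ≤ k) (η : ℝ) (z : ℂ)
    (hz : ‖z‖ < 1) :
    ∃ ε₀ : ℝ, 0 < ε₀ ∧
      (∀ ε : ℝ, 0 < ε → ε < ε₀ →
        Summable (fun l : ℕ => ‖Eterm k (1 + ε) (1 + η * ε) z (l + 1)‖)) ∧
      Filter.Tendsto
        (fun ε : ℝ => (Efun k (1 + ε) (1 + η * ε) z - 1) / (ε : ℂ) ^ 2)
        (nhdsWithin 0 (Set.Ioi 0))
        (nhds (-(((k : ℂ) * ((k : ℂ) + 2 * (η : ℂ))) / 2) * (z / (1 - z) ^ 2))) := by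
  have hR : ‖z‖ < 1 := hz
  set R : ℝ := ‖z‖ with hRdef
  have hR0 : 0 ≤ R := norm_nonneg z
  set C : ℝ := 2^k - 1 + 2^k*(2*|η| + η^2) with hCdef
  have h2k : (2:ℝ) ≤ 2^k := by
    calc (2:ℝ) = 2^1 := (pow_one 2).symm
      _ ≤ 2^k := pow_le_pow_right₀ one_le_two hk
  have hC1 : 1 ≤ C := by
    have h' : (0:ℝ) ≤ 2^k*(2*|η| + η^2) := by positivity
    rw [hCdef]; linarith
  have hC0 : 0 < C := by linarith
  set ε₀ : ℝ := min 1 ((1 - R)/(2*C)) with hε₀def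
  have hε₀pos : 0 < ε₀ := lt_min one_pos (div_pos (by linarith) (by linarith))
  set r' : ℝ := (1+R)/2 with hr'def
  have hr'0 : 0 ≤ r' := by rw [hr'def]; linarith
  have hr'1 : r' < 1 := by rw [hr'def]; linarith
  -- the uniform bound
  have hbase : ∀ ε : ℝ, 0 < ε → ε < ε₀ → (1 + C*ε)*R ≤ r' := by
    intro ε hε hεlt
    have h1 : ε ≤ (1 - R)/(2*C) := le_of_lt (lt_of_lt_of_le hεlt (min_le_right _ _))
    have h2 : C*ε ≤ (1-R)/2 := by
      have h1' := (le_div_iff₀ (by linarith : (0:ℝ) < 2*C)).mp h1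
      nlinarith
    have h3 : C*ε*R ≤ C*ε := by
      nlinarith [mul_nonneg (mul_nonneg hC0.le hε.le) (by linarith : (0:ℝ) ≤ 1-R)]
    rw [hr'def]; nlinarith
  have hbnd : ∀ ε : ℝ, 0 < ε → ε < ε₀ → ∀ l : ℕ,
      ‖Eterm k (1+ε) (1+η*ε) z (l+1)‖ ≤ ε^2 * ((k:ℝ)*C*((l+1:ℕ):ℝ)^2*r'^(l+1)) := by
    intro ε hε hεlt l
    have hε1 : ε ≤ 1 := le_of_lt (lt_of_lt_of_le hεlt (min_le_left _ _))
    calc ‖Eterm k (1+ε) (1+η*ε) z (l+1)‖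
        ≤ ε^2 * ((k:ℝ)*C*((l+1:ℕ):ℝ)^2*((1+C*ε)*R)^(l+1)) := by
          have := Eterm_bound k (l+1) hk (by omega) η z ε hε hε1
          rw [← hCdef] at this
          exact this
      _ ≤ ε^2 * ((k:ℝ)*C*((l+1:ℕ):ℝ)^2*r'^(l+1)) := by
          have hb0 : (0:ℝ) ≤ (1+C*ε)*R := by positivity
          have := pow_le_pow_left₀ hb0 (hbase ε hε hεlt) (l+1)
          have hnn : (0:ℝ) ≤ ε^2*((k:ℝ)*C*((l+1:ℕ):ℝ)^2) := by positivity
          calc ε^2 * ((k:ℝ)*C*((l+1:ℕ):ℝ)^2*((1+C*ε)*R)^(l+1))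
              = ε^2*((k:ℝ)*C*((l+1:ℕ):ℝ)^2) * ((1+C*ε)*R)^(l+1) := by ring
            _ ≤ ε^2*((k:ℝ)*C*((l+1:ℕ):ℝ)^2) * r'^(l+1) := by
                exact mul_le_mul_of_nonneg_left this hnn
            _ = ε^2 * ((k:ℝ)*C*((l+1:ℕ):ℝ)^2*r'^(l+1)) := by ring
  -- summability of the bound
  have hsum_bnd : Summable (fun l : ℕ => (k:ℝ)*C*((l+1:ℕ):ℝ)^2*r'^(l+1)) := by
    have h1 : Summable (fun n : ℕ => (n:ℝ)^2 * r'^n) :=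
      summable_pow_mul_geometric_of_norm_lt_one 2
        (by rwa [Real.norm_eq_abs, abs_of_nonneg hr'0])
    have h2 : Summable (fun l : ℕ => ((l+1:ℕ):ℝ)^2 * r'^(l+1)) :=
      h1.comp_injective (add_left_injective 1)
    simpa [mul_assoc] using h2.mul_left ((k:ℝ)*C)
  -- summability of the terms
  have hsummable : ∀ ε : ℝ, 0 < ε → ε < ε₀ →
      Summable (fun l : ℕ => ‖Eterm k (1 + ε) (1 + η * ε) z (l + 1)‖) := by
    intro ε hε hεlt
    apply Summable.of_nonneg_of_le (fun l => norm_nonneg _) (hbnd ε hε hεlt)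
    simpa [mul_assoc] using hsum_bnd.mul_left (ε^2)
  refine ⟨ε₀, hε₀pos, hsummable, ?_⟩
  -- the limit L and the sum of pointwise limits
  set L : ℂ := -(((k : ℂ) * ((k : ℂ) + 2 * (η : ℂ))) / 2) * (z / (1 - z) ^ 2) with hLdef
  have hzc : ‖z‖ < 1 := hR
  have hgeom : HasSum (fun n : ℕ => (n:ℂ) * z^n) (z/(1-z)^2) :=
    hasSum_coe_mul_geometric_of_norm_lt_one hzc
  have htsum_shift : ∑' l : ℕ, ((l+1:ℕ):ℂ) * z^(l+1) = z/(1-z)^2 := by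
    have h0 := Summable.tsum_eq_zero_add hgeom.summable
    rw [hgeom.tsum_eq] at h0
    simp only [Nat.cast_zero, pow_zero, zero_mul, mul_one, zero_add] at h0
    exact h0.symm
  have htsum_g : ∑' l : ℕ, (-(((k:ℂ)*((k:ℂ)+2*(η:ℂ)))/2) * ((l+1:ℕ):ℂ) * z^(l+1)) = L := by
    have heq : ∀ l : ℕ, -(((k:ℂ)*((k:ℂ)+2*(η:ℂ)))/2) * ((l+1:ℕ):ℂ) * z^(l+1)
        = -(((k:ℂ)*((k:ℂ)+2*(η:ℂ)))/2) * (((l+1:ℕ):ℂ) * z^(l+1)) := fun l => by ring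
    rw [tsum_congr heq, tsum_mul_left, htsum_shift]
  -- dominated convergence
  have hsumlim : Filter.Tendsto
      (fun ε : ℝ => ∑' l : ℕ, (Eterm k (1+ε) (1+η*ε) z (l+1) / (ε:ℂ)^2))
      (nhdsWithin 0 (Set.Ioi 0)) (nhds L) := by
    rw [← htsum_g]
    apply tendsto_tsum_of_dominated_convergence hsum_bnd
    · intro l
      exact Eterm_pointwise k (l+1) η z (by omega)
    · filter_upwards [Ioo_mem_nhdsGT_of_mem (Set.left_mem_Ico.mpr hε₀pos)] with ε hε l
      have hε' : 0 < ε := hε.1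
      have hnorm : ‖Eterm k (1+ε) (1+η*ε) z (l+1) / (ε:ℂ)^2‖
          = ‖Eterm k (1+ε) (1+η*ε) z (l+1)‖ / ε^2 := by
        rw [norm_div, norm_pow, Complex.norm_real, Real.norm_eq_abs, abs_of_pos hε']
      rw [hnorm, div_le_iff₀ (by positivity)]
      calc ‖Eterm k (1+ε) (1+η*ε) z (l+1)‖ ≤ ε^2 * ((k:ℝ)*C*((l+1:ℕ):ℝ)^2*r'^(l+1)) :=
            hbnd ε hε' hε.2 l
        _ = (k:ℝ)*C*((l+1:ℕ):ℝ)^2*r'^(l+1) * ε^2 := by ring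
  -- S and its limits
  set S : ℝ → ℂ := fun ε => ∑' l : ℕ, Eterm k (1+ε) (1+η*ε) z (l+1) with hSdef
  have hS' : Filter.Tendsto (fun ε : ℝ => S ε / (ε:ℂ)^2)
      (nhdsWithin 0 (Set.Ioi 0)) (nhds L) := by
    apply hsumlim.congr
    intro ε
    rw [hSdef]
    exact tsum_div_const
  have hsq : Filter.Tendsto (fun ε : ℝ => ((ε:ℂ))^2) (nhdsWithin 0 (Set.Ioi 0)) (nhds 0) := by
    have hcont : Continuous (fun ε : ℝ => ((ε:ℂ))^2) := by continuity
    have := (hcont.tendsto 0).mono_left (nhdsWithin_le_nhds (s := Set.Ioi 0))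
    simpa using this
  have hS0 : Filter.Tendsto S (nhdsWithin 0 (Set.Ioi 0)) (nhds 0) := by
    have h := hS'.mul hsq
    rw [mul_zero] at h
    apply h.congr'
    filter_upwards [self_mem_nhdsWithin] with ε hε
    have hε0 : ((ε:ℂ))^2 ≠ 0 := pow_ne_zero _ (Complex.ofReal_ne_zero.mpr (ne_of_gt hε))
    field_simp
    exact mul_div_cancel_right₀ _ (Complex.ofReal_ne_zero.mpr (ne_of_gt hε))
  have h2nd : Filter.Tendsto (fun ε : ℝ => (Complex.exp (S ε) - 1 - S ε) / (ε:ℂ)^2)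
      (nhdsWithin 0 (Set.Ioi 0)) (nhds 0) := by
    have hS0n : Filter.Tendsto (fun ε : ℝ => ‖S ε‖) (nhdsWithin 0 (Set.Ioi 0)) (nhds 0) := by
      have h := hS0.norm
      rwa [norm_zero] at h
    apply squeeze_zero_norm' (a := fun ε : ℝ => ‖S ε / (ε:ℂ)^2‖ * ‖S ε‖)
    · filter_upwards [self_mem_nhdsWithin, hS0n.eventually_lt_const (by norm_num : (0:ℝ) < 1)]
        with ε hε hS1
      have hε' : (0:ℝ) < ε := hε
      have hexp : ‖Complex.exp (S ε) - 1 - S ε‖ ≤ ‖S ε‖^2 := by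
        have h := Complex.norm_exp_sub_one_sub_id_le (x := S ε)
          (le_of_lt hS1)
        exact h
      calc ‖(Complex.exp (S ε) - 1 - S ε) / (ε:ℂ)^2‖
          = ‖Complex.exp (S ε) - 1 - S ε‖ / ε^2 := by
            rw [norm_div, norm_pow, Complex.norm_real, Real.norm_eq_abs, abs_of_pos hε']
        _ ≤ ‖S ε‖^2 / ε^2 := by gcongr
        _ = (‖S ε‖/ε^2) * ‖S ε‖ := by ring
        _ = ‖S ε / (ε:ℂ)^2‖ * ‖S ε‖ := by
            rw [norm_div, norm_pow, Complex.norm_real, Real.norm_eq_abs, abs_of_pos hε']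
    · have h := hS'.norm.mul hS0n
      rwa [mul_zero] at h
  have hfinal := hS'.add h2nd
  rw [add_zero] at hfinal
  apply hfinal.congr
  intro ε
  simp only [Efun, ← hSdef]
  ring
end
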